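/- For every positive integer n, the least common multiple (up to units) of the quantum binomial coefficients [n choose 0], [n choose 1], ..., [n choose n] in ℤ[x] equals ∏_{1 ≤ k ≤ n, k ∤ (n+1)} Θ_k. Equivalently, the fractional ℤ[x]-ideal generated by the inverses [n choose k]^{−1}, 0 ≤ k ≤ n, is principal, generated by (∏_{1 ≤ k ≤ n, k ∤ n+1} Θ_k)^{−1}. -/
import Mathlib

open Polynomial

noncomputable def qnum : ℕ → Polynomial ℤ
  | 0 => 0
  | 1 => 1
  | (n + 2) => X * qnum (n + 1) - qnum n

noncomputable def thetaR (n : ℕ) : Polynomial ℝ :=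
  ∏ k ∈ (Finset.Ico 1 n).filter (fun k => Nat.Coprime k n),
    (X - C (2 * Real.cos (k * Real.pi / n)))

noncomputable def qfact : ℕ → Polynomial ℤ
  | 0 => 1
  | (n + 1) => qnum (n + 1) * qfact n

noncomputable def QR (m : ℕ) : Polynomial ℝ := (qnum m).map (Int.castRingHom ℝ)

lemma QR_zero : QR 0 = 0 := by simp [QR, qnum]
lemma QR_one : QR 1 = 1 := by simp [QR, qnum]
lemma QR_rec (m : ℕ) : QR (m + 2) = X * QR (m + 1) - QR m := by
  simp [QR, qnum, Polynomial.map_sub, Polynomial.map_mul]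

lemma QR_eval_sin (m : ℕ) (θ : ℝ) :
    (QR m).eval (2 * Real.cos θ) * Real.sin θ = Real.sin (m * θ) := by
  induction m using Nat.twoStepInduction with
  | zero => simp [QR_zero]
  | one => simp [QR_one]
  | more m ih1 ih2 =>
    rw [QR_rec]
    have h1 : ((m + 2 : ℕ) : ℝ) * θ = ((m+1:ℕ):ℝ) * θ + θ := by push_cast; ring
    have h2 : ((m : ℕ) : ℝ) * θ = ((m+1:ℕ):ℝ) * θ - θ := by push_cast; ring
    rw [h1, Real.sin_add]
    have h3 := ih1
    rw [h2, Real.sin_sub] at h3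
    simp only [eval_sub, eval_mul, eval_X]
    linear_combination 2 * Real.cos θ * ih2 - h3

lemma qnum_monic_natDegree (m : ℕ) :
    (qnum (m + 1)).Monic ∧ (qnum (m + 1)).natDegree = m := by
  induction m using Nat.twoStepInduction with
  | zero => constructor <;> simp [qnum, Polynomial.monic_one]
  | one =>
    have : qnum 2 = X := by simp [qnum]
    rw [this]; exact ⟨monic_X, natDegree_X⟩
  | more m ih1 ih2 =>
    have hrec : qnum (m + 3) = X * qnum (m + 2) - qnum (m + 1) := rfl
    have hm : (X * qnum (m + 2)).Monic := (monic_X).mul ih2.1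
    have hd : (X * qnum (m + 2)).natDegree = m + 2 := by
      rw [natDegree_mul (X_ne_zero) ih2.1.ne_zero, natDegree_X, ih2.2]; ring
    have hlt : (qnum (m + 1)).natDegree < (X * qnum (m + 2)).natDegree := by
      rw [hd, ih1.2]; omega
    constructor
    · rw [hrec]
      have := hm.sub_of_left (q := qnum (m+1)) ?_
      · exact this
      · rw [degree_eq_natDegree hm.ne_zero, degree_eq_natDegree ih1.1.ne_zero]
        exact_mod_cast hlt
    · rw [hrec, natDegree_sub_eq_left_of_natDegree_lt hlt, hd]

lemma QR_monic (m : ℕ) : (QR (m + 1)).Monic :=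
  ((qnum_monic_natDegree m).1).map _

lemma QR_natDegree (m : ℕ) : (QR (m + 1)).natDegree = m := by
  rw [QR, natDegree_map_eq_of_injective (fun a b h => by simpa using h)]
  exact (qnum_monic_natDegree m).2

lemma angle_mem {k d : ℕ} (h1 : 1 ≤ k) (h2 : k < d) :
    (k : ℝ) * Real.pi / d ∈ Set.Icc 0 Real.pi := by
  have hd0 : 0 < d := by omega
  have hd : (0:ℝ) < d := by exact_mod_cast hd0
  constructor
  · positivity
  · rw [div_le_iff₀ hd]
    have : (k:ℝ) ≤ d := by exact_mod_cast h2.le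
    nlinarith [Real.pi_pos]

lemma angle_pos {k d : ℕ} (h1 : 1 ≤ k) (h2 : k < d) :
    0 < (k : ℝ) * Real.pi / d ∧ (k : ℝ) * Real.pi / d < Real.pi := by
  have hd0 : 0 < d := by omega
  have hd : (0:ℝ) < d := by exact_mod_cast hd0
  have hk : (0:ℝ) < k := by exact_mod_cast h1
  constructor
  · positivity
  · rw [div_lt_iff₀ hd]
    have : (k:ℝ) < d := by exact_mod_cast h2
    nlinarith [Real.pi_pos]

lemma cos_eq_imp {k d k' d' : ℕ} (hk : 1 ≤ k) (hkd : k < d) (hk' : 1 ≤ k') (hkd' : k' < d')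
    (h : 2 * Real.cos ((k:ℝ) * Real.pi / d) = 2 * Real.cos ((k':ℝ) * Real.pi / d')) :
    k * d' = k' * d := by
  have h2 : Real.cos ((k:ℝ) * Real.pi / d) = Real.cos ((k':ℝ) * Real.pi / d') := by linarith
  have h3 := Real.injOn_cos (angle_mem hk hkd) (angle_mem hk' hkd') h2
  have hd0 : 0 < d := by omega
  have hd0' : 0 < d' := by omega
  have hd : (0:ℝ) < d := by exact_mod_cast hd0
  have hd' : (0:ℝ) < d' := by exact_mod_cast hd0'
  have hπ := Real.pi_pos
  rw [div_eq_div_iff (ne_of_gt hd) (ne_of_gt hd')] at h3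
  have h4 : (k:ℝ) * d' = (k':ℝ) * d := by
    apply mul_right_cancel₀ (ne_of_gt hπ)
    nlinarith [h3]
  exact_mod_cast h4

lemma QR_root {m j : ℕ} (h1 : 1 ≤ j) (h2 : j < m) :
    (QR m).eval (2 * Real.cos ((j:ℝ) * Real.pi / m)) = 0 := by
  have hm0 : 0 < m := by omega
  have hm : (0:ℝ) < m := by exact_mod_cast hm0
  have key := QR_eval_sin m ((j:ℝ) * Real.pi / m)
  have hθ := angle_pos h1 h2
  have hsin : Real.sin ((j:ℝ) * Real.pi / m) ≠ 0 :=
    ne_of_gt (Real.sin_pos_of_pos_of_lt_pi hθ.1 hθ.2)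
  have hmul : (m:ℝ) * ((j:ℝ) * Real.pi / m) = (j:ℝ) * Real.pi := by
    field_simp
  rw [hmul, Real.sin_nat_mul_pi] at key
  exact (mul_eq_zero.mp key).resolve_right hsin

lemma QR_prod (m : ℕ) (hm : 0 < m) :
    QR m = ∏ j ∈ Finset.Ico 1 m, (X - C (2 * Real.cos ((j:ℝ) * Real.pi / m))) := by
  set P : Polynomial ℝ := ∏ j ∈ Finset.Ico 1 m, (X - C (2 * Real.cos ((j:ℝ) * Real.pi / m))) with hP
  have hPmonic : P.Monic := monic_prod_of_monic _ _ (fun i _ => monic_X_sub_C _)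
  have hPdeg : P.natDegree = m - 1 := by
    rw [hP, natDegree_prod _ _ (fun i _ => (monic_X_sub_C _).ne_zero)]
    simp only [natDegree_X_sub_C]
    rw [Finset.sum_const, Nat.card_Ico, smul_eq_mul, mul_one]
  have hdvd : P ∣ QR m := by
    apply Finset.prod_dvd_of_coprime
    · intro a ha b hb hab
      simp only [Finset.coe_Ico, Set.mem_Ico] at ha hb
      apply isCoprime_X_sub_C_of_isUnit_sub
      rw [isUnit_iff_ne_zero, sub_ne_zero]
      intro hcontra
      exact hab (by
        have := cos_eq_imp ha.1 ha.2 hb.1 hb.2 hcontra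
        exact Nat.eq_of_mul_eq_mul_right hm this)
    · intro i hi
      simp only [Finset.mem_Ico] at hi
      rw [dvd_iff_isRoot]
      exact QR_root hi.1 hi.2
  obtain ⟨q, hq⟩ := hdvd
  obtain ⟨m', rfl⟩ : ∃ m', m = m' + 1 := ⟨m - 1, by omega⟩
  have hQmonic := QR_monic m'
  have hq_monic : q.Monic := hPmonic.of_mul_monic_left (hq ▸ hQmonic)
  have hdeg : q.natDegree = 0 := by
    have := QR_natDegree m'
    rw [hq, natDegree_mul hPmonic.ne_zero hq_monic.ne_zero, hPdeg] at this
    omega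
  rw [hq, eq_one_of_monic_natDegree_zero hq_monic hdeg, mul_one]
lemma QR_eq_prod_thetaR (m : ℕ) (hm : 0 < m) :
    QR m = ∏ d ∈ m.divisors, thetaR d := by
  rw [QR_prod m hm]
  unfold thetaR
  rw [Finset.prod_sigma']
  symm
  apply Finset.prod_bij (fun (x : Σ _ : ℕ, ℕ) _ => x.2 * (m / x.1))
  · -- maps into Ico 1 m
    rintro ⟨d, k⟩ hx
    simp only [Finset.mem_sigma, Nat.mem_divisors, Finset.mem_filter, Finset.mem_Ico] at hx
    obtain ⟨⟨hdm, -⟩, ⟨hk1, hkd⟩, -⟩ := hx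
    have hd0 : 0 < d := by omega
    have h1 : d * (m / d) = m := Nat.mul_div_cancel' hdm
    have h2 : 0 < m / d := Nat.div_pos (Nat.le_of_dvd hm hdm) hd0
    simp only [Finset.mem_Ico]
    constructor
    · exact Nat.one_le_iff_ne_zero.mpr (by positivity)
    · calc k * (m / d) < d * (m / d) := by
            exact (Nat.mul_lt_mul_right h2).mpr hkd
        _ = m := h1
  · -- injective
    rintro ⟨d, k⟩ hx ⟨d', k'⟩ hx' heq
    simp only [Finset.mem_sigma, Nat.mem_divisors, Finset.mem_filter, Finset.mem_Ico] at hx hx'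
    obtain ⟨⟨hdm, -⟩, ⟨hk1, hkd⟩, hcop⟩ := hx
    obtain ⟨⟨hdm', -⟩, ⟨hk1', hkd'⟩, hcop'⟩ := hx'
    have hd0 : 0 < d := by omega
    have hd0' : 0 < d' := by omega
    have hkey : k * d' = k' * d := by
      have h1 : k * (m / d) * (d * d') = k' * (m / d') * (d' * d) := by
        rw [heq]; ring
      have e1 : k * (m / d) * (d * d') = k * d' * m := by
        rw [show k * (m / d) * (d * d') = k * d' * (d * (m/d)) by ring,
          Nat.mul_div_cancel' hdm]
      have e2 : k' * (m / d') * (d' * d) = k' * d * m := by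
        rw [show k' * (m / d') * (d' * d) = k' * d * (d' * (m/d')) by ring,
          Nat.mul_div_cancel' hdm']
      rw [e1, e2] at h1
      exact Nat.eq_of_mul_eq_mul_right hm h1
    have hdd' : d = d' := by
      have h1 : d ∣ k * d' := ⟨k', by rw [hkey, Nat.mul_comm]⟩
      have h2 : d' ∣ k' * d := ⟨k, by rw [← hkey, Nat.mul_comm]⟩
      have h3 := (Nat.Coprime.dvd_of_dvd_mul_left (Nat.coprime_comm.mp hcop) h1)
      have h4 := (Nat.Coprime.dvd_of_dvd_mul_left (Nat.coprime_comm.mp hcop') h2)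
      exact Nat.dvd_antisymm h3 h4
    subst hdd'
    have : k = k' := by
      have := hkey
      exact Nat.eq_of_mul_eq_mul_right hd0 this
    simp [this]
  · -- surjective
    intro j hj
    simp only [Finset.mem_Ico] at hj
    obtain ⟨hj1, hjm⟩ := hj
    have hj0 : 0 < j := hj1
    set g := Nat.gcd j m with hg
    have hg0 : 0 < g := Nat.gcd_pos_of_pos_left _ hj0
    have hgj : g ∣ j := Nat.gcd_dvd_left _ _
    have hgm : g ∣ m := Nat.gcd_dvd_right _ _
    refine ⟨⟨m / g, j / g⟩, ?_, ?_⟩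
    · simp only [Finset.mem_sigma, Nat.mem_divisors, Finset.mem_filter, Finset.mem_Ico]
      refine ⟨⟨Nat.div_dvd_of_dvd hgm, by omega⟩, ⟨?_, ?_⟩, ?_⟩
      · exact (Nat.one_le_div_iff hg0).mpr (Nat.le_of_dvd hj0 hgj)
      · exact Nat.div_lt_div_of_lt_of_dvd hgm hjm
      · exact Nat.coprime_div_gcd_div_gcd hg0
    · show j / g * (m / (m / g)) = j
      rw [Nat.div_div_self hgm (by omega)]
      exact Nat.div_mul_cancel hgj
  · -- values agree
    rintro ⟨d, k⟩ hx
    simp only [Finset.mem_sigma, Nat.mem_divisors, Finset.mem_filter, Finset.mem_Ico] at hx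
    obtain ⟨⟨hdm, -⟩, ⟨hk1, hkd⟩, -⟩ := hx
    have hd0 : 0 < d := by omega
    show X - C (2 * Real.cos ((k:ℝ) * Real.pi / d)) =
      X - C (2 * Real.cos ((↑(k * (m / d)):ℝ) * Real.pi / m))
    have hdr : (d:ℝ) ≠ 0 := by exact_mod_cast hd0.ne'
    have hmr : (m:ℝ) ≠ 0 := by exact_mod_cast hm.ne'
    have hkm : k * m = (k * (m / d)) * d := by
      rw [mul_assoc, Nat.div_mul_cancel hdm]
    have hcast : (k:ℝ) * m = ((k * (m / d) : ℕ):ℝ) * d := by exact_mod_cast hkm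
    have hang : (k:ℝ) * Real.pi / d = (↑(k * (m / d)):ℝ) * Real.pi / m := by
      rw [div_eq_div_iff hdr hmr]
      linear_combination Real.pi * hcast
    rw [hang]

lemma thetaR_monic (d : ℕ) : (thetaR d).Monic :=
  monic_prod_of_monic _ _ (fun i _ => monic_X_sub_C _)

lemma thetaR_ne_zero (d : ℕ) : thetaR d ≠ 0 := (thetaR_monic d).ne_zero

lemma qfact_map (k : ℕ) :
    (qfact k).map (Int.castRingHom ℝ) = ∏ m ∈ Finset.Icc 1 k, QR m := by
  induction k with
  | zero => simp [qfact]
  | succ k ih =>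
    rw [show qfact (k+1) = qnum (k+1) * qfact k from rfl, Polynomial.map_mul, ih,
      Finset.prod_Icc_succ_top (by omega)]
    rw [mul_comm]
    rfl

lemma divisors_eq_filter {m n : ℕ} (hm : 0 < m) (hmn : m ≤ n) :
    m.divisors = (Finset.Icc 1 n).filter (· ∣ m) := by
  ext d
  simp only [Nat.mem_divisors, Finset.mem_filter, Finset.mem_Icc]
  constructor
  · rintro ⟨hd, -⟩
    exact ⟨⟨Nat.one_le_iff_ne_zero.mpr (by rintro rfl; simp at hd; omega),
      le_trans (Nat.le_of_dvd hm hd) hmn⟩, hd⟩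
  · rintro ⟨-, hd⟩
    exact ⟨hd, by omega⟩

lemma card_multiples {d k n : ℕ} (hk : k ≤ n) :
    ((Finset.Icc 1 k).filter (d ∣ ·)).card = k / d := by
  have : Finset.Icc 1 k = Finset.Ioc 0 k := by ext x; simp; omega
  rw [this]
  exact Nat.Ioc_filter_dvd_card_eq_div k d

lemma qfact_map_theta {k n : ℕ} (hk : k ≤ n) :
    (qfact k).map (Int.castRingHom ℝ) = ∏ d ∈ Finset.Icc 1 n, thetaR d ^ (k / d) := by
  rw [qfact_map]
  have h1 : ∀ m ∈ Finset.Icc 1 k, QR m = ∏ d ∈ (Finset.Icc 1 n).filter (· ∣ m), thetaR d := by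
    intro m hm
    simp only [Finset.mem_Icc] at hm
    rw [QR_eq_prod_thetaR m (by omega), divisors_eq_filter (n := n) (by omega) (by omega)]
  rw [Finset.prod_congr rfl h1]
  have h2 : ∀ m ∈ Finset.Icc 1 k, (∏ d ∈ (Finset.Icc 1 n).filter (· ∣ m), thetaR d)
      = ∏ d ∈ Finset.Icc 1 n, if d ∣ m then thetaR d else 1 := by
    intro m _
    rw [Finset.prod_filter]
  rw [Finset.prod_congr rfl h2, Finset.prod_comm]
  apply Finset.prod_congr rfl
  intro d _
  rw [← Finset.prod_filter, Finset.prod_const, card_multiples hk]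

lemma map_int_injective : Function.Injective (Polynomial.map (Int.castRingHom ℝ)) :=
  Polynomial.map_injective _ (fun a b h => by simpa using h)

lemma B_eq (Θ : ℕ → Polynomial ℤ)
    (hΘ : ∀ m, 0 < m → (Θ m).map (Int.castRingHom ℝ) = thetaR m)
    (n : ℕ) (B : ℕ → Polynomial ℤ)
    (hB : ∀ k ≤ n, B k * (qfact k * qfact (n - k)) = qfact n)
    (k : ℕ) (hk : k ≤ n) :
    B k = ∏ d ∈ (Finset.Icc 1 n).filter (fun d => d ≤ k % d + (n - k) % d), Θ d := by
  apply map_int_injective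
  have h0 := congrArg (Polynomial.map (Int.castRingHom ℝ)) (hB k hk)
  rw [Polynomial.map_mul, Polynomial.map_mul, qfact_map_theta hk,
    qfact_map_theta (Nat.sub_le n k), qfact_map_theta (le_refl n)] at h0
  have hsplit : ∀ d ∈ Finset.Icc 1 n,
      thetaR d ^ (n / d) = (thetaR d ^ (k / d) * thetaR d ^ ((n - k) / d)) *
        thetaR d ^ (if d ≤ k % d + (n - k) % d then 1 else 0) := by
    intro d hd
    simp only [Finset.mem_Icc] at hd
    rw [← pow_add, ← pow_add]
    congr 1
    have h := Nat.add_div (a := k) (b := n - k) (by omega : 0 < d)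
    rw [show k + (n - k) = n from by omega] at h
    exact h
  rw [Finset.prod_congr rfl hsplit, Finset.prod_mul_distrib, Finset.prod_mul_distrib] at h0
  have hP : (∏ d ∈ Finset.Icc 1 n, thetaR d ^ (k / d)) *
      (∏ d ∈ Finset.Icc 1 n, thetaR d ^ ((n - k) / d)) ≠ 0 := by
    apply mul_ne_zero <;>
      exact Finset.prod_ne_zero_iff.mpr (fun d _ => pow_ne_zero _ (thetaR_ne_zero d))
  have hBk : (B k).map (Int.castRingHom ℝ)
      = ∏ d ∈ Finset.Icc 1 n, thetaR d ^ (if d ≤ k % d + (n - k) % d then 1 else 0) := by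
    apply mul_right_cancel₀ hP
    rw [h0]; ring
  rw [hBk, Polynomial.map_prod, Finset.prod_filter]
  apply Finset.prod_congr rfl
  intro d hd
  simp only [Finset.mem_Icc] at hd
  split
  · rw [pow_one, hΘ d (by omega)]
  · rw [pow_zero]

lemma mod_eq_pred {d x : ℕ} (hd : 0 < d) (h : d ∣ x + 1) : x % d = d - 1 := by
  have h1 : d ∣ d * (x / d) := Dvd.intro _ rfl
  have h2 : x + 1 = d * (x / d) + (x % d + 1) := by have := Nat.div_add_mod x d; omega
  have h3 : d ∣ x % d + 1 := (Nat.dvd_add_right h1).mp (h2 ▸ h)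
  have h4 : d ≤ x % d + 1 := Nat.le_of_dvd (by omega) h3
  have h5 : x % d < d := Nat.mod_lt _ hd
  omega

lemma dvd_succ_of_mod {d n : ℕ} (hd : 0 < d) (h : n % d = d - 1) : d ∣ n + 1 := by
  have h2 : n + 1 = d * (n / d) + (n % d + 1) := by have := Nat.div_add_mod n d; omega
  rw [h2, h, show d - 1 + 1 = d from by omega]
  exact dvd_add (Dvd.intro _ rfl) dvd_rfl

lemma no_carry_of_dvd {d n k : ℕ} (hd : 1 ≤ d) (hdn : d ≤ n) (hk : k ≤ n)
    (hdvd : d ∣ n + 1) : ¬ d ≤ k % d + (n - k) % d := by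
  intro hle
  have ha : k % d < d := Nat.mod_lt _ (by omega)
  have hb : (n - k) % d < d := Nat.mod_lt _ (by omega)
  have hab : (k % d + (n - k) % d) % d = n % d := by
    rw [← Nat.add_mod]
    congr 1
    omega
  have hnd : n % d = d - 1 := mod_eq_pred (by omega) hdvd
  have hsub : (k % d + (n - k) % d) % d = k % d + (n - k) % d - d := by
    rw [Nat.mod_eq_sub_mod hle, Nat.mod_eq_of_lt (by omega)]
  omega

lemma carry_lemma {d n : ℕ} (hd1 : 1 ≤ d) (hdn : d ≤ n) (hnd : ¬ d ∣ n + 1) :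
    n % d + 1 ≤ n ∧ d ≤ (n % d + 1) % d + (n - (n % d + 1)) % d := by
  have hr : n % d < d := Nat.mod_lt _ (by omega)
  have hrd : n % d + 1 < d := by
    rcases Nat.lt_or_ge (n % d + 1) d with h | h
    · exact h
    · exact absurd (dvd_succ_of_mod (by omega) (by omega)) hnd
  have hk_le : n % d + 1 ≤ n := by omega
  have h1 : (n % d + 1) % d = n % d + 1 := Nat.mod_eq_of_lt hrd
  have h2 : (n - (n % d + 1)) % d = d - 1 := by
    apply mod_eq_pred (by omega)
    rw [show n - (n % d + 1) + 1 = n - n % d from by omega]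
    exact Nat.dvd_sub_mod n
  exact ⟨hk_le, by omega⟩

lemma thetaR_coprime {d d' : ℕ} (hne : d ≠ d') : IsCoprime (thetaR d) (thetaR d') := by
  unfold thetaR
  apply IsCoprime.prod_left
  intro k hk
  apply IsCoprime.prod_right
  intro k' hk'
  simp only [Finset.mem_filter, Finset.mem_Ico] at hk hk'
  apply isCoprime_X_sub_C_of_isUnit_sub
  rw [isUnit_iff_ne_zero, sub_ne_zero]
  intro h
  have hkey := cos_eq_imp hk.1.1 hk.1.2 hk'.1.1 hk'.1.2 h
  have h1 : d ∣ k * d' := ⟨k', by rw [hkey, Nat.mul_comm]⟩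
  have h2 : d' ∣ k' * d := ⟨k, by rw [← hkey, Nat.mul_comm]⟩
  have h3 := Nat.Coprime.dvd_of_dvd_mul_left (Nat.coprime_comm.mp hk.2) h1
  have h4 := Nat.Coprime.dvd_of_dvd_mul_left (Nat.coprime_comm.mp hk'.2) h2
  exact hne (Nat.dvd_antisymm h3 h4)

set_option synthInstance.maxHeartbeats 1000000 in
instance : DecompositionMonoid (Polynomial ℤ) := inferInstance

lemma theta_monic (Θ : ℕ → Polynomial ℤ)
    (hΘ : ∀ m, 0 < m → (Θ m).map (Int.castRingHom ℝ) = thetaR m)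
    {d : ℕ} (hd : 0 < d) : (Θ d).Monic := by
  apply Polynomial.monic_of_injective (f := Int.castRingHom ℝ) (fun a b h => by simpa using h)
  rw [hΘ d hd]
  exact thetaR_monic d

lemma theta_relPrime (Θ : ℕ → Polynomial ℤ)
    (hΘ : ∀ m, 0 < m → (Θ m).map (Int.castRingHom ℝ) = thetaR m)
    {d d' : ℕ} (hd : 0 < d) (hd' : 0 < d') (hne : d ≠ d') :
    IsRelPrime (Θ d) (Θ d') := by
  intro p hp hp'
  have h1 : p.map (Int.castRingHom ℝ) ∣ thetaR d :=
    hΘ d hd ▸ Polynomial.map_dvd _ hp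
  have h2 : p.map (Int.castRingHom ℝ) ∣ thetaR d' :=
    hΘ d' hd' ▸ Polynomial.map_dvd _ hp'
  have hu : IsUnit (p.map (Int.castRingHom ℝ)) :=
    (thetaR_coprime hne).isUnit_of_dvd' h1 h2
  have hdeg : p.natDegree = 0 := by
    have := Polynomial.natDegree_eq_zero_of_isUnit hu
    rwa [natDegree_map_eq_of_injective (fun a b h => by simpa using h)] at this
  obtain ⟨a, rfl⟩ := Polynomial.natDegree_eq_zero.mp hdeg
  rw [Polynomial.isUnit_C]
  exact (theta_monic Θ hΘ hd).isPrimitive a hp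

lemma prod_dvd_of_relPrime {s : Finset ℕ} {f : ℕ → Polynomial ℤ} {m : Polynomial ℤ}
    (hrel : ∀ i ∈ s, ∀ j ∈ s, i ≠ j → IsRelPrime (f i) (f j))
    (hdvd : ∀ i ∈ s, f i ∣ m) : (∏ i ∈ s, f i) ∣ m := by
  induction s using Finset.induction_on with
  | empty => simpa using one_dvd m
  | @insert a s ha ih =>
    rw [Finset.prod_insert ha]
    apply IsRelPrime.mul_dvd
    · apply IsRelPrime.prod_right
      intro i hi
      exact hrel a (Finset.mem_insert_self a s) i (Finset.mem_insert_of_mem hi)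
        (fun h => ha (h ▸ hi))
    · exact hdvd a (Finset.mem_insert_self a s)
    · exact ih (fun i hi j hj hij => hrel i (Finset.mem_insert_of_mem hi) j
        (Finset.mem_insert_of_mem hj) hij) (fun i hi => hdvd i (Finset.mem_insert_of_mem hi))

theorem qbinom_lcm (Θ : ℕ → Polynomial ℤ)
    (hΘ : ∀ m, 0 < m → (Θ m).map (Int.castRingHom ℝ) = thetaR m)
    (n : ℕ) (hn : 0 < n) (B : ℕ → Polynomial ℤ)
    (hB : ∀ k ≤ n, B k * (qfact k * qfact (n - k)) = qfact n) :
    (∀ k ≤ n, B k ∣ ∏ j ∈ (Finset.Icc 1 n).filter (fun j => ¬ j ∣ (n + 1)), Θ j) ∧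
      ∀ m : Polynomial ℤ, (∀ k ≤ n, B k ∣ m) →
        (∏ j ∈ (Finset.Icc 1 n).filter (fun j => ¬ j ∣ (n + 1)), Θ j) ∣ m := by
  constructor
  · intro k hk
    rw [B_eq Θ hΘ n B hB k hk]
    apply Finset.prod_dvd_prod_of_subset
    intro d hd
    simp only [Finset.mem_filter, Finset.mem_Icc] at hd ⊢
    refine ⟨hd.1, fun hdvd => ?_⟩
    exact no_carry_of_dvd hd.1.1 hd.1.2 hk hdvd hd.2
  · intro m hm
    apply prod_dvd_of_relPrime
    · intro i hi j hj hij
      simp only [Finset.mem_filter, Finset.mem_Icc] at hi hj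
      exact theta_relPrime Θ hΘ (by omega) (by omega) hij
    · intro j hj
      simp only [Finset.mem_filter, Finset.mem_Icc] at hj
      obtain ⟨⟨hj1, hjn⟩, hjdvd⟩ := hj
      obtain ⟨hkle, hcarry⟩ := carry_lemma hj1 hjn hjdvd
      refine dvd_trans ?_ (hm (n % j + 1) hkle)
      rw [B_eq Θ hΘ n B hB (n % j + 1) hkle]
      apply Finset.dvd_prod_of_mem
      simp only [Finset.mem_filter, Finset.mem_Icc]
      exact ⟨⟨hj1, hjn⟩, hcarry⟩
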